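/- Let q > 1, let A be a finite nonempty set, let Q : A → ℝ, and let μ be a full-support probability distribution on A. Suppose π* is a full-support probability distribution on A that maximizes the function π ↦ ∑_{a∈A} π(a)·Q(a) − D_q(π‖μ) over all probability distributions on A. Then there exists a constant c ∈ ℝ such that for every a ∈ A: q·ln_q(π*(a)/μ(a)) = Q(a) − c. -/

import Mathlib

open Finset

/-- The q-logarithm: for `q ≠ 1` and `x > 0`, `ln_q x = (x^(q-1) - 1)/(q-1)`. -/
noncomputable def qlog (q x : ℝ) : ℝ := (x ^ (q - 1) - 1) / (q - 1)

lemma qlog_deriv (q : ℝ) (hq : 1 < q) (c0 m d : ℝ) (hc : 0 < c0) (hm : 0 < m) :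
    HasDerivAt (fun t : ℝ => (c0 + t * d) * qlog q ((c0 + t * d) / m))
      (d * (q * qlog q (c0 / m) + 1)) 0 := by
  have hq1 : q - 1 ≠ 0 := by linarith
  have hy : (0:ℝ) < c0 / m := div_pos hc hm
  have hf : HasDerivAt (fun t : ℝ => c0 + t * d) d 0 := by
    simpa using ((hasDerivAt_id (0:ℝ)).mul_const d).const_add c0
  have hg : HasDerivAt (fun t : ℝ => (c0 + t * d) / m) (d / m) 0 := hf.div_const m
  have hcomp : HasDerivAt (fun t : ℝ => ((c0 + t * d) / m) ^ (q - 1))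
      (d / m * (q - 1) * (c0 / m) ^ (q - 1 - 1)) 0 := by
    have := hg.rpow_const (p := q - 1) (by left; simpa using hy.ne')
    simpa using this
  have hql : HasDerivAt (fun t : ℝ => qlog q ((c0 + t * d) / m))
      (d / m * (q - 1) * (c0 / m) ^ (q - 1 - 1) / (q - 1)) 0 := by
    unfold qlog
    exact (hcomp.sub_const 1).div_const (q - 1)
  have hmul := hf.fun_mul hql
  have hpow : c0 / m * (c0 / m) ^ (q - 1 - 1) = (c0 / m) ^ (q - 1) := by
    have h := Real.rpow_add hy 1 (q - 1 - 1)
    rw [Real.rpow_one] at h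
    rw [← h]; norm_num
  have hX : (c0 / m) ^ (q - 1) = (q - 1) * qlog q (c0 / m) + 1 := by
    unfold qlog; field_simp; ring
  convert hmul using 1
  · rfl
  · rfl
  simp only [zero_mul, add_zero]
  have e1 : c0 * (d / m * (q - 1) * (c0 / m) ^ (q - 1 - 1) / (q - 1))
      = d * (c0 / m * (c0 / m) ^ (q - 1 - 1)) := by
    field_simp
  rw [e1, hpow, hX]; ring


/-- First-order optimality condition for Tsallis-KL-regularized policy optimization:
if the full-support probability distribution `π*` maximizes
`π ↦ ∑_a π(a)·Q(a) − D_q(π‖μ)` over all probability distributions on `A`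
(where `D_q(π‖μ) = ∑_a π(a)·ln_q(π(a)/μ(a))`, terms with `π(a) = 0` counting as `0`),
then there is a constant `c` with `q·ln_q(π*(a)/μ(a)) = Q(a) − c` for all `a`. -/
theorem tsallisKL_regularized_optimality {A : Type*} [Fintype A] [Nonempty A]
    (q : ℝ) (hq : 1 < q) (Q : A → ℝ)
    (mu : A → ℝ) (hmu0 : ∀ a, 0 < mu a) (hmu1 : ∑ a, mu a = 1)
    (pstar : A → ℝ) (hps0 : ∀ a, 0 < pstar a) (hps1 : ∑ a, pstar a = 1)
    (hmax : ∀ p : A → ℝ, (∀ a, 0 ≤ p a) → ∑ a, p a = 1 →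
      (∑ a, p a * Q a) - (∑ a, (if p a = 0 then 0 else p a * qlog q (p a / mu a)))
        ≤ (∑ a, pstar a * Q a)
          - (∑ a, (if pstar a = 0 then 0 else pstar a * qlog q (pstar a / mu a)))) :
    ∃ c : ℝ, ∀ a, q * qlog q (pstar a / mu a) = Q a - c := by
  have hconst : ∀ a b : A,
      Q a - q * qlog q (pstar a / mu a) = Q b - q * qlog q (pstar b / mu b) := by
    intro a b
    classical
    rcases eq_or_ne a b with rfl | hab
    · rfl
    set d : A → ℝ := fun x => (if x = a then (1:ℝ) else 0) - (if x = b then (1:ℝ) else 0)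
      with hd_def
    have hda : d a = 1 := by simp [hd_def, hab]
    have hdb : d b = -1 := by simp [hd_def, Ne.symm hab]
    have hd_abs : ∀ x, |d x| ≤ 1 := by
      intro x; simp only [hd_def]
      split_ifs <;> norm_num
    set ε : ℝ := Finset.univ.inf' Finset.univ_nonempty pstar with hε_def
    have εpos : 0 < ε := (Finset.lt_inf'_iff _).mpr fun x _ => hps0 x
    have εle : ∀ x, ε ≤ pstar x := fun x => Finset.inf'_le _ (Finset.mem_univ x)
    have hpos : ∀ t : ℝ, |t| < ε → ∀ x, 0 < pstar x + t * d x := by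
      intro t ht x
      have h1 : |t * d x| ≤ |t| := by
        rw [abs_mul]
        calc |t| * |d x| ≤ |t| * 1 := by
              exact mul_le_mul_of_nonneg_left (hd_abs x) (abs_nonneg t)
          _ = |t| := mul_one _
      have h2 := neg_abs_le (t * d x)
      have h3 := εle x
      linarith
    have hsum_d : ∑ x, d x = 0 := by
      simp [hd_def, Finset.sum_sub_distrib, Finset.sum_ite_eq']
    set ψ : ℝ → ℝ := fun t =>
      (∑ x, (pstar x + t * d x) * Q x)
        - ∑ x, (pstar x + t * d x) * qlog q ((pstar x + t * d x) / mu x) with hψ_def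
    have hψ0 : ψ 0 = (∑ x, pstar x * Q x)
        - ∑ x, (if pstar x = 0 then 0 else pstar x * qlog q (pstar x / mu x)) := by
      simp only [hψ_def, zero_mul, add_zero]
      congr 1
      exact Finset.sum_congr rfl fun x _ => (if_neg (hps0 x).ne').symm
    have hloc : IsLocalMax ψ 0 := by
      filter_upwards [Metric.ball_mem_nhds (0:ℝ) εpos] with t ht
      rw [Metric.mem_ball, Real.dist_eq, sub_zero] at ht
      have hp0 := hpos t ht
      have hp1 : ∑ x, (pstar x + t * d x) = 1 := by
        rw [Finset.sum_add_distrib, hps1, ← Finset.mul_sum, hsum_d, mul_zero, add_zero]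
      have h := hmax (fun x => pstar x + t * d x) (fun x => (hp0 x).le) hp1
      rw [hψ0]
      refine le_trans (le_of_eq ?_) h
      simp only [hψ_def]
      congr 1
      exact Finset.sum_congr rfl fun x _ => (if_neg (hp0 x).ne').symm
    have hderiv : HasDerivAt ψ
        ((∑ x, d x * Q x) - ∑ x, d x * (q * qlog q (pstar x / mu x) + 1)) 0 := by
      apply HasDerivAt.sub
      · apply HasDerivAt.fun_sum
        intro x _
        simpa using (((hasDerivAt_id (0:ℝ)).mul_const (d x)).const_add (pstar x)).mul_const (Q x)
      · exact HasDerivAt.fun_sum fun x _ => qlog_deriv q hq (pstar x) (mu x) (d x) (hps0 x) (hmu0 x)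
    have hzero := hloc.hasDerivAt_eq_zero hderiv
    have ev : ∀ F : A → ℝ, ∑ x, d x * F x = F a - F b := by
      intro F
      simp [hd_def, sub_mul, ite_mul, Finset.sum_sub_distrib, Finset.sum_ite_eq']
    rw [ev, ev] at hzero
    linarith
  obtain ⟨a0⟩ := ‹Nonempty A›
  refine ⟨Q a0 - q * qlog q (pstar a0 / mu a0), fun a => ?_⟩
  have := hconst a a0
  linarith
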